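/- Let N > 1, m > 1, M > 0, and q > N(m-1)/(N-1). Suppose w : (r_l, ∞) → (0, ∞) is C¹ and satisfies w_r ≥ M r^{-(N-1)(q-m+1)/(m-1)} w^{q/(m-1)} and w(r) → l ∈ (0, ∞] as r → ∞. Then for all s > r_l sufficiently large, w(s) ≤ ((q(N-1) - N(m-1))/(M(q-m+1)))^{(m-1)/(q-m+1)} s^{(q(N-1)-N(m-1))/(q-m+1)}. -/

import Mathlib

open Real Filter

theorem stmt14 (N m M q rl : ℝ) (hN : 1 < N) (hm : 1 < m) (hM : 0 < M) (hrl : 0 < rl)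
    (hq : N * (m - 1) / (N - 1) < q)
    (w : ℝ → ℝ) (hreg : ContDiffOn ℝ 1 w (Set.Ioi rl))
    (hpos : ∀ r, rl < r → 0 < w r)
    (hineq : ∀ r, rl < r →
      M * r ^ (-(N - 1) * (q - m + 1) / (m - 1)) * w r ^ (q / (m - 1)) ≤ deriv w r)
    (hlim : (∃ l : ℝ, 0 < l ∧ Tendsto w atTop (nhds l)) ∨ Tendsto w atTop atTop) :
    ∃ s₀, rl < s₀ ∧ ∀ s, s₀ < s →
      w s ≤ ((q * (N - 1) - N * (m - 1)) / (M * (q - m + 1))) ^ ((m - 1) / (q - m + 1))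
        * s ^ ((q * (N - 1) - N * (m - 1)) / (q - m + 1)) := by
  have hm' : (0:ℝ) < m - 1 := by linarith
  have hN' : (0:ℝ) < N - 1 := by linarith
  have hqN : N * (m - 1) < q * (N - 1) := by
    have := (div_lt_iff₀ hN').mp hq
    linarith
  have hqm : (0:ℝ) < q - m + 1 := by nlinarith
  set α : ℝ := (q - m + 1) / (m - 1) with hαdef
  have hα : 0 < α := div_pos hqm hm'
  set β : ℝ := (N - 1) * (q - m + 1) / (m - 1) with hβdef
  have hβ : 1 < β := by
    rw [hβdef, lt_div_iff₀ hm']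
    nlinarith
  set c0 : ℝ := α * M / (β - 1) with hc0def
  have hc0 : 0 < c0 := div_pos (mul_pos hα hM) (by linarith)
  have hdiff : ∀ x, rl < x → HasDerivAt w (deriv w x) x := by
    intro x hx
    exact ((hreg.differentiableOn one_ne_zero).differentiableAt
      (Ioi_mem_nhds hx)).hasDerivAt
  set h : ℝ → ℝ := fun r => w r ^ (-α) - c0 * r ^ (1 - β) with hhdef
  have hhderiv : ∀ x, rl < x → HasDerivAt h
      (deriv w x * (-α) * w x ^ (-α - 1) - c0 * ((1 - β) * x ^ (1 - β - 1))) x := by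
    intro x hx
    have h1 : HasDerivAt (fun r => w r ^ (-α)) (deriv w x * (-α) * w x ^ (-α - 1)) x :=
      (hdiff x hx).rpow_const (Or.inl (hpos x hx).ne')
    have h2 : HasDerivAt (fun r : ℝ => c0 * r ^ (1 - β))
        (c0 * ((1 - β) * x ^ (1 - β - 1))) x :=
      (Real.hasDerivAt_rpow_const (Or.inl (hrl.trans hx).ne')).const_mul c0
    exact h1.sub h2
  have hdnp : ∀ x, rl < x →
      deriv w x * (-α) * w x ^ (-α - 1) - c0 * ((1 - β) * x ^ (1 - β - 1)) ≤ 0 := by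
    intro x hx
    have hx0 : 0 < x := hrl.trans hx
    have hwx : 0 < w x := hpos x hx
    have h2 : M * x ^ (-β) * w x ^ (q / (m - 1)) ≤ deriv w x := by
      have := hineq x hx
      rwa [show -(N - 1) * (q - m + 1) / (m - 1) = -β by rw [hβdef]; ring] at this
    have hw1 : w x ^ (-α - 1) * w x ^ (q / (m - 1)) = 1 := by
      rw [← Real.rpow_add hwx,
        show -α - 1 + q / (m - 1) = 0 by rw [hαdef]; field_simp; ring,
        Real.rpow_zero]
    have h3 : α * (w x ^ (-α - 1)) * (M * x ^ (-β) * w x ^ (q / (m - 1)))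
        ≤ α * (w x ^ (-α - 1)) * deriv w x := by
      apply mul_le_mul_of_nonneg_left h2
      positivity
    have hkey : α * M * x ^ (-β) ≤ α * (w x ^ (-α - 1)) * deriv w x := by
      calc α * M * x ^ (-β)
          = α * M * x ^ (-β) * (w x ^ (-α - 1) * w x ^ (q / (m - 1))) := by
            rw [hw1, mul_one]
        _ = α * (w x ^ (-α - 1)) * (M * x ^ (-β) * w x ^ (q / (m - 1))) := by ring
        _ ≤ _ := h3
    have hc0b : c0 * (1 - β) = -(α * M) := by
      have hb1 : β - 1 ≠ 0 := sub_ne_zero.mpr hβ.ne'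
      rw [hc0def, div_mul_eq_mul_div, div_eq_iff hb1]
      ring
    have heq : deriv w x * (-α) * w x ^ (-α - 1) - c0 * ((1 - β) * x ^ (1 - β - 1))
        = α * M * x ^ (-β) - α * (w x ^ (-α - 1)) * deriv w x := by
      rw [show (1 - β - 1 : ℝ) = -β by ring]
      linear_combination (-(x ^ (-β))) * hc0b
    linarith [hkey, heq.le, heq.ge]
  have hanti : ∀ s R, rl < s → s ≤ R → h R ≤ h s := by
    intro s R hs hsR
    have hsub : Set.Icc s R ⊆ Set.Ioi rl := fun x hx => lt_of_lt_of_le hs hx.1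
    have hsub' : interior (Set.Icc s R) ⊆ Set.Ioi rl := by
      rw [interior_Icc]
      exact fun x hx => hs.trans hx.1
    have hcont : ContinuousOn h (Set.Icc s R) := fun x hx =>
      ((hhderiv x (hsub hx)).continuousAt).continuousWithinAt
    have hdiffOn : DifferentiableOn ℝ h (interior (Set.Icc s R)) := fun x hx =>
      ((hhderiv x (hsub' hx)).differentiableAt).differentiableWithinAt
    have hnp : ∀ x ∈ interior (Set.Icc s R), deriv h x ≤ 0 := by
      intro x hx
      rw [(hhderiv x (hsub' hx)).deriv]
      exact hdnp x (hsub' hx)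
    exact antitoneOn_of_deriv_nonpos (convex_Icc s R) hcont hdiffOn hnp
      (Set.left_mem_Icc.2 hsR) (Set.right_mem_Icc.2 hsR) hsR
  have hbound : ∀ s, rl < s → c0 * s ^ (1 - β) ≤ w s ^ (-α) := by
    intro s hs
    have hev : ∀ᶠ R in atTop, c0 * s ^ (1 - β) - c0 * R ^ (1 - β) ≤ w s ^ (-α) := by
      filter_upwards [eventually_ge_atTop s] with R hR
      have h1 := hanti s R hs hR
      have h2 : 0 < w R ^ (-α) := Real.rpow_pos_of_pos (hpos R (hs.trans_le hR)) _
      simp only [hhdef] at h1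
      linarith
    have hlim2 : Tendsto (fun R : ℝ => c0 * s ^ (1 - β) - c0 * R ^ (1 - β)) atTop
        (nhds (c0 * s ^ (1 - β) - c0 * 0)) := by
      refine Tendsto.sub tendsto_const_nhds (Tendsto.const_mul c0 ?_)
      have := tendsto_rpow_neg_atTop (y := β - 1) (by linarith)
      simpa [show -(β - 1) = 1 - β by ring] using this
    have := le_of_tendsto hlim2 hev
    simpa using this
  refine ⟨rl + 1, by linarith, fun s hs => ?_⟩
  have hs' : rl < s := by linarith
  have hs0 : 0 < s := hrl.trans hs'
  have hws : 0 < w s := hpos s hs'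
  have hb := hbound s hs'
  set K : ℝ := (q * (N - 1) - N * (m - 1)) / (M * (q - m + 1)) with hKdef
  have hK : 0 < K := div_pos (by nlinarith) (by positivity)
  have hβ1 : β - 1 ≠ 0 := by linarith
  have hc0K : c0 = K⁻¹ := by
    have hd : (0:ℝ) < q * (N - 1) - N * (m - 1) := by nlinarith
    rw [hβdef] at hβ1
    rw [hc0def, hKdef, hαdef, hβdef, inv_div]
    rw [div_eq_div_iff hβ1 hd.ne']
    field_simp
    ring
  have hps : 0 < c0 * s ^ (1 - β) := by positivity
  have step : (w s ^ (-α)) ^ (-(1 / α)) ≤ (c0 * s ^ (1 - β)) ^ (-(1 / α)) :=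
    Real.rpow_le_rpow_of_nonpos hps hb (neg_nonpos.mpr (by positivity))
  have hlhs : (w s ^ (-α)) ^ (-(1 / α)) = w s := by
    rw [← Real.rpow_mul hws.le, show (-α) * -(1 / α) = 1 by field_simp, Real.rpow_one]
  have hrhs : (c0 * s ^ (1 - β)) ^ (-(1 / α))
      = K ^ (1 / α) * s ^ ((1 - β) * -(1 / α)) := by
    rw [Real.mul_rpow hc0.le (Real.rpow_pos_of_pos hs0 _).le, ← Real.rpow_mul hs0.le,
      hc0K, Real.inv_rpow hK.le, Real.rpow_neg hK.le, inv_inv]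
  have e1 : 1 / α = (m - 1) / (q - m + 1) := by
    rw [hαdef, one_div_div]
  have e2 : (1 - β) * -(1 / α) = (q * (N - 1) - N * (m - 1)) / (q - m + 1) := by
    rw [hβdef, hαdef]
    field_simp
    ring
  rw [← e1, ← e2, ← hrhs, ← hlhs]
  exact step
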